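/- If a graph G of dual bonds is m-entangled for some m ≥ 1, then G is entangled. -/
import Mathlib


open Set Topology Metric Bornology MeasureTheory ProbabilityTheory ENNReal

noncomputable section

/-! ## The lattice `ℤ³`, its dual, bonds, dual bonds and plaquettes -/

abbrev R3 : Type := Fin 3 → ℝ
abbrev Zpt : Type := Fin 3 → ℤ
/-- Index for bonds/dual bonds/plaquettes: a base vertex and a direction. -/
abbrev Idx : Type := Zpt × Fin 3

def toR3 (v : Zpt) : R3 := fun i => (v i : ℝ)
def unitVec (i : Fin 3) : R3 := fun j => if j = i then 1 else 0
def unitZ (i : Fin 3) : Zpt := fun j => if j = i then 1 else 0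
def halfVec : R3 := fun _ => 1/2

/-- The endpoints of the bond of `ℤ³` with base vertex `v` and direction `i`. -/
def primalEp (e : Idx) : R3 × R3 := (toR3 e.1, toR3 e.1 + unitVec e.2)
/-- The endpoints of the dual bond (of `(ℤ³)* = ℤ³ + (1/2,1/2,1/2)`) crossing the
plaquette with index `e`. -/
def dualEp (e : Idx) : R3 × R3 :=
  (toR3 e.1 + halfVec - unitVec e.2, toR3 e.1 + halfVec)

/-- The closed unit segment realizing a bond. -/
def seg (ep : Idx → R3 × R3) (e : Idx) : Set R3 := segment ℝ (ep e).1 (ep e).2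

abbrev bondSeg (e : Idx) : Set R3 := seg primalEp e
abbrev dualSeg (e : Idx) : Set R3 := seg dualEp e

/-- The union of the bonds in `E`, as a subset of `ℝ³`. -/
def segUnion (ep : Idx → R3 × R3) (E : Set Idx) : Set R3 := ⋃ e ∈ E, seg ep e

abbrev bondsSet (E : Set Idx) : Set R3 := segUnion primalEp E
abbrev dualSet (E : Set Idx) : Set R3 := segUnion dualEp E

/-- The plaquette with corner `e.1` and normal direction `e.2`: a closed unit square. -/
def plaqSet (e : Idx) : Set R3 :=
  {x | x e.2 = (e.1 e.2 : ℝ) ∧ ∀ j, j ≠ e.2 → (e.1 j : ℝ) ≤ x j ∧ x j ≤ (e.1 j : ℝ) + 1}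

/-- The 1-skeleton of `ℤ³`: all vertices and bonds. -/
def skeleton : Set R3 := ⋃ e : Idx, bondSeg e

/-- The plaquette system determined by the set `E` of present plaquettes:
the whole 1-skeleton of `ℤ³` together with the plaquettes of `E`. -/
def plaqSystem (E : Set Idx) : Set R3 := skeleton ∪ ⋃ e ∈ E, plaqSet e

/-! ## Spheres, entanglement, piecewise-linear sets, null-homotopy -/

abbrev sphere2 : Set (EuclideanSpace ℝ (Fin 3)) := Metric.sphere 0 1
abbrev circleS : Set (EuclideanSpace ℝ (Fin 2)) := Metric.sphere 0 1
abbrev diskS : Set (EuclideanSpace ℝ (Fin 2)) := Metric.closedBall 0 1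

/-- `f` is a topologically embedded 2-sphere in `ℝ³ ∖ X` both of whose complementary
components intersect `X` (equivalently: `X` avoids the image and meets at least two
connected components of the complement of the image). -/
def SphereSeparates (f : sphere2 → R3) (X : Set R3) : Prop :=
  Topology.IsEmbedding f ∧ Disjoint (range f) X ∧
    ∃ x ∈ X, ∃ y ∈ X,
      connectedComponentIn (range f)ᶜ x ≠ connectedComponentIn (range f)ᶜ y

/-- A subset of `ℝ³` is entangled if no embedded 2-sphere separates it. -/
def IsEntangled (X : Set R3) : Prop := ¬ ∃ f : sphere2 → R3, SphereSeparates f X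

/-- `I(X)`: the union of the bounded connected components of `ℝ³ ∖ X`. -/
def interiorRegion (X : Set R3) : Set R3 :=
  {x | x ∉ X ∧ IsBounded (connectedComponentIn Xᶜ x)}

/-- The union of the unbounded connected components of `ℝ³ ∖ X`. -/
def exteriorRegion (X : Set R3) : Set R3 :=
  {x | x ∉ X ∧ ¬ IsBounded (connectedComponentIn Xᶜ x)}

/-- `S` is the underlying space of a finite simplicial complex in `ℝ³` all of whose
simplices have at most 3 vertices (i.e. a finite union of points, closed segments and
closed triangles meeting along common faces). -/
def IsPLSet (S : Set R3) : Prop :=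
  ∃ K : Geometry.SimplicialComplex ℝ R3, K.faces.Finite ∧
    (∀ s ∈ K.faces, s.card ≤ 3) ∧ S = K.space

/-- The loop `γ` bounds a continuous image of a disk inside `P`; for an embedded circle
`γ ⊆ P` this says exactly that `γ` is null-homotopic (contractible) in `P`. -/
def NullHomotopicIn (γ P : Set R3) : Prop :=
  ∃ f : EuclideanSpace ℝ (Fin 2) → R3, ContinuousOn f diskS ∧ f '' diskS ⊆ P ∧
    f '' circleS = γ ∧ InjOn f circleS

/-- A loop of bonds of `ℤ³`: a (finite) union of bonds homeomorphic to a circle. -/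
def IsBondLoop (γ : Set R3) : Prop :=
  (∃ E : Set Idx, E.Finite ∧ γ = bondsSet E) ∧ Nonempty (↥γ ≃ₜ ↥circleS)

/-! ## `m`-entanglement -/

/-- The set of endpoints (vertices) of the bonds in `S`. -/
def vertsOf (ep : Idx → R3 × R3) (S : Set Idx) : Set R3 := ⋃ e ∈ S, {(ep e).1, (ep e).2}

/-- Two points are `m`-entangled-adjacent in `S` if some entangled subset of `S` with at
most `m` bonds contains both. -/
def mAdj (ep : Idx → R3 × R3) (m : ℕ) (S : Set Idx) (v w : R3) : Prop :=
  ∃ T ⊆ S, T.Finite ∧ T.ncard ≤ m ∧ IsEntangled (segUnion ep T) ∧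
    v ∈ segUnion ep T ∧ w ∈ segUnion ep T

/-- A set of bonds is `m`-entangled if the graph on its vertices determined by
`m`-entangled adjacency is connected. -/
def IsMEntangled (ep : Idx → R3 × R3) (m : ℕ) (S : Set Idx) : Prop :=
  ∀ v ∈ vertsOf ep S, ∀ w ∈ vertsOf ep S, Relation.ReflTransGen (mAdj ep m S) v w

/-- If a set `T` is entangled and disjoint from the image of an embedded sphere `f`,
then all points of `T` lie in the same connected component of the complement. -/
lemma comp_eq_of_entangled {f : sphere2 → R3} (hemb : Topology.IsEmbedding f)
    {T : Set R3} (hT : IsEntangled T) (hdisj : Disjoint (range f) T)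
    {v w : R3} (hv : v ∈ T) (hw : w ∈ T) :
    connectedComponentIn (range f)ᶜ v = connectedComponentIn (range f)ᶜ w := by
  by_contra h
  exact hT ⟨f, hemb, hdisj, v, hv, w, hw, h⟩

/-- A point of a dual segment lies in the same component of the complement of an
embedded sphere as the first endpoint of that segment, provided the segment avoids
the sphere. -/
lemma comp_eq_endpoint {f : sphere2 → R3} {e : Idx} {x : R3}
    (hx : x ∈ seg dualEp e) (hsub : seg dualEp e ⊆ (range f)ᶜ) :
    connectedComponentIn (range f)ᶜ x = connectedComponentIn (range f)ᶜ (dualEp e).1 := by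
  have hconn : IsPreconnected (seg dualEp e) := (convex_segment _ _).isPreconnected
  have hmem : (dualEp e).1 ∈ seg dualEp e := left_mem_segment ℝ _ _
  have h1 : seg dualEp e ⊆ connectedComponentIn (range f)ᶜ x :=
    hconn.subset_connectedComponentIn hx hsub
  exact connectedComponentIn_eq (h1 hmem)

/-- If a graph `G` of dual bonds is `m`-entangled for some `m ≥ 1`, then `G` is
entangled. -/
theorem m_entangled_is_entangled (m : ℕ) (hm : 1 ≤ m) (G : Set Idx)
    (hG : IsMEntangled dualEp m G) :
    IsEntangled (dualSet G) := by
  rintro ⟨f, hemb, hdisj, x, hx, y, hy, hne⟩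
  have hcompl : dualSet G ⊆ (range f)ᶜ := by
    intro z hz hz'
    exact (Set.disjoint_left.mp hdisj hz') hz
  simp only [dualSet, segUnion, mem_iUnion, exists_prop] at hx hy
  obtain ⟨e, he, hxe⟩ := hx
  obtain ⟨e', he', hye⟩ := hy
  have hsube : seg dualEp e ⊆ (range f)ᶜ := fun z hz =>
    hcompl (mem_iUnion₂.mpr ⟨e, he, hz⟩)
  have hsube' : seg dualEp e' ⊆ (range f)ᶜ := fun z hz =>
    hcompl (mem_iUnion₂.mpr ⟨e', he', hz⟩)
  have hv : (dualEp e).1 ∈ vertsOf dualEp G :=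
    mem_iUnion₂.mpr ⟨e, he, by simp⟩
  have hw : (dualEp e').1 ∈ vertsOf dualEp G :=
    mem_iUnion₂.mpr ⟨e', he', by simp⟩
  have hchain := hG _ hv _ hw
  have hstep : connectedComponentIn (range f)ᶜ (dualEp e).1 =
      connectedComponentIn (range f)ᶜ (dualEp e').1 := by
    generalize (dualEp e').1 = w at hchain ⊢
    induction hchain with
    | refl => rfl
    | tail hab hbc ih =>
        obtain ⟨T, hTG, _, _, hTent, hbT, hcT⟩ := hbc
        have hTsub : segUnion dualEp T ⊆ dualSet G := by
          intro z hz
          obtain ⟨a, ha, hz⟩ := mem_iUnion₂.mp hz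
          exact mem_iUnion₂.mpr ⟨a, hTG ha, hz⟩
        have hTdisj : Disjoint (range f) (segUnion dualEp T) :=
          hdisj.mono_right hTsub
        exact ih.trans (comp_eq_of_entangled hemb hTent hTdisj hbT hcT)
  exact hne ((comp_eq_endpoint hxe hsube).trans
    (hstep.trans (comp_eq_endpoint hye hsube').symm))

end
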